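/- Let X = Y* with Y separable and γ : [a,b] → X be C¹_{w*} with inf_{[a,b]} ‖γ'‖ > 0. Then Γ = γ([a,b]) is 1-Ahlfors regular: there is C ≥ 1 with C⁻¹ r ≤ H¹(Γ ∩ B(x,r)) ≤ Cr for all x ∈ Γ and 0 < r ≤ diam(Γ). -/

import Mathlib

open MeasureTheory Metric NormedSpace
open scoped ENNReal NNReal

private lemma aux_div1 {m M C r : ℝ} (hm : 0 < m) (hM : 0 < M)
    (hC0 : 0 < C) (hC : 4 * M / m ≤ C) (hr : 0 < r) :
    r / C ≤ m / 2 * (r / (2 * M)) := by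
  have e : m * (4 * M / m) = 4 * M := by field_simp
  have h := mul_le_mul_of_nonneg_left hC hm.le
  have hmc : 4 * M ≤ m * C := by linarith [e ▸ h]
  rw [div_le_iff₀ hC0]
  have e2 : m / 2 * (r / (2 * M)) * C = r * (m * C) / (4 * M) := by field_simp; ring
  rw [e2, le_div_iff₀ (by positivity)]
  nlinarith [mul_le_mul_of_nonneg_left hmc hr.le]

private lemma aux_div2 {m M C r δ ba : ℝ} (hm : 0 < m) (hδ : 0 < δ) (hM : 0 < M)
    (hC0 : 0 < C) (hC : 4 * M * ba / (m * δ) ≤ C) (hr : 0 < r) (hrM : r ≤ M * ba) :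
    r / C ≤ m / 2 * (δ / 2) := by
  have e : m * δ * (4 * M * ba / (m * δ)) = 4 * M * ba := by field_simp
  have h := mul_le_mul_of_nonneg_left hC (by positivity : (0:ℝ) ≤ m * δ)
  have key : 4 * M * ba ≤ m * δ * C := by linarith [e ▸ h]
  rw [div_le_iff₀ hC0]
  nlinarith

set_option maxHeartbeats 1000000 in
/-- If `γ : [a,b] → X = Y*` is `C¹_{w*}` with `inf ‖γ'‖ > 0`, then
`Γ = γ([a,b])` is 1-Ahlfors regular. -/
theorem stmt14 {Y : Type*} [NormedAddCommGroup Y] [NormedSpace ℝ Y]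
    [TopologicalSpace.SeparableSpace Y]
    [MeasurableSpace (StrongDual ℝ Y)] [BorelSpace (StrongDual ℝ Y)]
    (a b : ℝ) (hab : a ≤ b)
    (γ γ' : ℝ → StrongDual ℝ Y)
    (hderiv : ∀ t ∈ Set.Icc a b, ∀ y : Y,
      HasDerivWithinAt (fun s => γ s y) (γ' t y) (Set.Icc a b) t)
    (hcont : ContinuousOn γ' (Set.Icc a b))
    (m : ℝ) (hm : 0 < m) (hlow : ∀ t ∈ Set.Icc a b, m ≤ ‖γ' t‖) :
    ∃ C : ℝ, 1 ≤ C ∧ ∀ x ∈ γ '' Set.Icc a b, ∀ r : ℝ,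
      0 < r → r ≤ Metric.diam (γ '' Set.Icc a b) →
      ENNReal.ofReal (r / C) ≤ μH[1] (γ '' Set.Icc a b ∩ ball x r) ∧
      μH[1] (γ '' Set.Icc a b ∩ ball x r) ≤ ENNReal.ofReal (C * r) := by
  classical
  -- a uniform bound `M` on `‖γ'‖`
  obtain ⟨M₀, hM₀⟩ := isCompact_Icc.exists_bound_of_continuousOn hcont
  set M : ℝ := max M₀ m with hMdef
  have hmM : m ≤ M := le_max_right _ _
  have hM : 0 < M := lt_of_lt_of_le hm hmM
  have hMle : ∀ t ∈ Set.Icc a b, ‖γ' t‖ ≤ M := fun t ht =>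
    le_trans (hM₀ t ht) (le_max_left _ _)
  -- `γ` is `M`-Lipschitz on `[a,b]`
  have hLip : ∀ t₁ ∈ Set.Icc a b, ∀ t₂ ∈ Set.Icc a b,
      ‖γ t₂ - γ t₁‖ ≤ M * |t₂ - t₁| := by
    intro t₁ h₁ t₂ h₂
    refine ContinuousLinearMap.opNorm_le_bound _ (by positivity) (fun y => ?_)
    have key : ‖γ t₂ y - γ t₁ y‖ ≤ M * ‖y‖ * ‖t₂ - t₁‖ := by
      refine Convex.norm_image_sub_le_of_norm_hasDerivWithin_le
        (f := fun s => γ s y) (f' := fun s => γ' s y)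
        (fun t ht => hderiv t ht y) (fun t ht => ?_) (convex_Icc a b) h₁ h₂
      calc ‖γ' t y‖ ≤ ‖γ' t‖ * ‖y‖ := (γ' t).le_opNorm y
        _ ≤ M * ‖y‖ := by
            exact mul_le_mul_of_nonneg_right (hMle t ht) (norm_nonneg y)
    have : ‖(γ t₂ - γ t₁) y‖ = ‖γ t₂ y - γ t₁ y‖ := by
      simp [ContinuousLinearMap.sub_apply]
    rw [this]
    calc ‖γ t₂ y - γ t₁ y‖ ≤ M * ‖y‖ * ‖t₂ - t₁‖ := key
      _ = M * |t₂ - t₁| * ‖y‖ := by rw [Real.norm_eq_abs]; ring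
  -- uniform continuity of `γ'` gives a scale `δ`
  obtain ⟨δ, hδ, hδ'⟩ := Metric.uniformContinuousOn_iff.1
    (isCompact_Icc.uniformContinuousOn_of_continuous hcont) (m / 4) (by positivity)
  -- the key pointwise lower bound
  have hkey : ∀ t₁ ∈ Set.Icc a b, ∀ t₂ ∈ Set.Icc a b, t₁ ≤ t₂ → t₂ - t₁ < δ →
      ∃ y : Y, ‖y‖ ≤ 1 ∧ m / 2 * (t₂ - t₁) ≤ |γ t₂ y - γ t₁ y| := by
    intro t₁ h₁ t₂ h₂ hle hlt
    obtain ⟨y, hy1, hy2⟩ := (γ' t₁).exists_lt_apply_of_lt_opNorm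
      (r := ‖γ' t₁‖ - m / 4) (by linarith)
    refine ⟨y, hy1.le, ?_⟩
    set c : ℝ := γ' t₁ y with hc
    have hcabs : 3 * m / 4 ≤ |c| := by
      have h3 := hlow t₁ h₁
      rw [Real.norm_eq_abs] at hy2
      linarith
    have hsub : Set.Icc t₁ t₂ ⊆ Set.Icc a b := Set.Icc_subset_Icc h₁.1 h₂.2
    have hmvt : ‖(γ t₂ y - c * t₂) - (γ t₁ y - c * t₁)‖ ≤ m / 4 * ‖t₂ - t₁‖ := by
      refine Convex.norm_image_sub_le_of_norm_hasDerivWithin_le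
        (f := fun s => γ s y - c * s) (f' := fun s => γ' s y - c)
        (fun t ht => ?_) (fun t ht => ?_) (convex_Icc t₁ t₂)
        (Set.left_mem_Icc.2 hle) (Set.right_mem_Icc.2 hle)
      · have h1 := (hderiv t (hsub ht) y).mono hsub
        have h2 : HasDerivWithinAt (fun s : ℝ => c * s) c (Set.Icc t₁ t₂) t := by
          simpa using (hasDerivWithinAt_id t (Set.Icc t₁ t₂)).const_mul c
        exact h1.sub h2
      · have hdist : dist (γ' t) (γ' t₁) < m / 4 := by
          refine hδ' t (hsub ht) t₁ h₁ ?_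
          rw [Real.dist_eq, abs_of_nonneg (by linarith [ht.1] : (0:ℝ) ≤ t - t₁)]
          linarith [ht.2]
        rw [dist_eq_norm] at hdist
        have : ‖γ' t y - c‖ = ‖(γ' t - γ' t₁) y‖ := by
          simp [hc, ContinuousLinearMap.sub_apply]
        rw [this]
        calc ‖(γ' t - γ' t₁) y‖ ≤ ‖γ' t - γ' t₁‖ * ‖y‖ := (γ' t - γ' t₁).le_opNorm y
          _ ≤ m / 4 * 1 := by
              apply mul_le_mul hdist.le hy1.le (norm_nonneg y) (by positivity)
          _ = m / 4 := mul_one _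
    rw [Real.norm_eq_abs, Real.norm_eq_abs,
      abs_of_nonneg (by linarith : (0:ℝ) ≤ t₂ - t₁)] at hmvt
    have habs : |c * (t₂ - t₁)| ≤ |γ t₂ y - γ t₁ y|
        + |(γ t₂ y - c * t₂) - (γ t₁ y - c * t₁)| := by
      have hrw : c * (t₂ - t₁)
          = (γ t₂ y - γ t₁ y) - ((γ t₂ y - c * t₂) - (γ t₁ y - c * t₁)) := by ring
      rw [hrw]
      exact abs_sub _ _
    rw [abs_mul, abs_of_nonneg (by linarith : (0:ℝ) ≤ t₂ - t₁)] at habs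
    have hmul := mul_le_mul_of_nonneg_right hcabs (by linarith : (0:ℝ) ≤ t₂ - t₁)
    linarith
  -- bi-Lipschitz lower bound at scale `δ`
  have hbil : ∀ t₁ ∈ Set.Icc a b, ∀ t₂ ∈ Set.Icc a b, |t₂ - t₁| < δ →
      m / 2 * |t₂ - t₁| ≤ ‖γ t₂ - γ t₁‖ := by
    have main : ∀ t₁ ∈ Set.Icc a b, ∀ t₂ ∈ Set.Icc a b, t₁ ≤ t₂ → t₂ - t₁ < δ →
        m / 2 * (t₂ - t₁) ≤ ‖γ t₂ - γ t₁‖ := by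
      intro t₁ h₁ t₂ h₂ hle hlt
      obtain ⟨y, hy1, hy2⟩ := hkey t₁ h₁ t₂ h₂ hle hlt
      calc m / 2 * (t₂ - t₁) ≤ |γ t₂ y - γ t₁ y| := hy2
        _ = ‖(γ t₂ - γ t₁) y‖ := by simp [ContinuousLinearMap.sub_apply, Real.norm_eq_abs]
        _ ≤ ‖γ t₂ - γ t₁‖ * ‖y‖ := (γ t₂ - γ t₁).le_opNorm y
        _ ≤ ‖γ t₂ - γ t₁‖ * 1 := by
            exact mul_le_mul_of_nonneg_left hy1 (norm_nonneg _)
        _ = ‖γ t₂ - γ t₁‖ := mul_one _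
    intro t₁ h₁ t₂ h₂ hlt
    rcases le_total t₁ t₂ with h | h
    · rw [abs_of_nonneg (by linarith : (0:ℝ) ≤ t₂ - t₁)] at hlt ⊢
      exact main t₁ h₁ t₂ h₂ h hlt
    · rw [abs_of_nonpos (by linarith : t₂ - t₁ ≤ 0)] at hlt ⊢
      rw [norm_sub_rev]
      have := main t₂ h₂ t₁ h₁ h (by linarith)
      linarith [this]
  -- diameter bound
  have hdiam : diam (γ '' Set.Icc a b) ≤ M * (b - a) := by
    refine diam_le_of_forall_dist_le (by nlinarith) ?_
    rintro z ⟨t, ht, rfl⟩ w ⟨t', ht', rfl⟩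
    rw [dist_eq_norm]
    calc ‖γ t - γ t'‖ ≤ M * |t - t'| := hLip t' ht' t ht
      _ ≤ M * (b - a) := by
          apply mul_le_mul_of_nonneg_left _ hM.le
          rw [abs_le]
          constructor <;> linarith [ht.1, ht.2, ht'.1, ht'.2]
  -- number of intervals and the constant
  set N : ℕ := ⌊(b - a) / (δ / 2)⌋₊ + 1 with hN
  have hN1 : (1:ℝ) ≤ (N:ℝ) := by
    have : (1:ℕ) ≤ N := Nat.le_add_left 1 _
    exact_mod_cast this
  set C : ℝ := 1 + 4 * M / m + 4 * M * (b - a) / (m * δ) + 4 * (N:ℝ) * M / m with hC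
  have hba0 : (0:ℝ) ≤ b - a := by linarith
  have h1 : (0:ℝ) ≤ 4 * M / m := by positivity
  have h2 : (0:ℝ) ≤ 4 * M * (b - a) / (m * δ) := by positivity
  have h3 : (0:ℝ) ≤ 4 * (N:ℝ) * M / m := by positivity
  have hC1 : 1 ≤ C := by rw [hC]; linarith
  have hC0 : 0 < C := by linarith
  have hC4M : 4 * M / m ≤ C := by rw [hC]; linarith
  have hC4Mba : 4 * M * (b - a) / (m * δ) ≤ C := by rw [hC]; linarith
  have hC4NM : 4 * (N:ℝ) * M / m ≤ C := by rw [hC]; linarith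
  refine ⟨C, hC1, ?_⟩
  rintro x ⟨t₀, ht₀, rfl⟩ r hr hrdiam
  have hrM : r ≤ M * (b - a) := le_trans hrdiam hdiam
  have hba : 0 < b - a := by nlinarith
  constructor
  · -- LOWER BOUND
    set s : ℝ := min (r / (2 * M)) (δ / 2) with hs
    have hs0 : 0 < s := lt_min (by positivity) (by positivity)
    have hs1 : s ≤ r / (2 * M) := min_le_left _ _
    have hs2 : s ≤ δ / 2 := min_le_right _ _
    have hsba : 2 * s ≤ b - a := by
      have : r / (2 * M) ≤ (b - a) / 2 := by
        rw [div_le_div_iff₀ (by positivity) (by norm_num)]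
        nlinarith
      linarith
    -- choose the subinterval `[u, u+s]`
    set u : ℝ := if t₀ + s ≤ b then t₀ else t₀ - s with hu
    have hJ : a ≤ u ∧ u + s ≤ b ∧ u ≤ t₀ ∧ t₀ ≤ u + s := by
      by_cases h : t₀ + s ≤ b
      · rw [hu, if_pos h]
        exact ⟨ht₀.1, h, le_refl _, by linarith⟩
      · rw [hu, if_neg h]
        push_neg at h
        refine ⟨by linarith [ht₀.2], by linarith [ht₀.2], by linarith, by linarith⟩
    obtain ⟨hJ1, hJ2, hJ3, hJ4⟩ := hJ
    have huI : u ∈ Set.Icc a b := ⟨hJ1, by linarith⟩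
    have husI : u + s ∈ Set.Icc a b := ⟨by linarith, hJ2⟩
    obtain ⟨y, hy1, hy2⟩ := hkey u huI (u + s) husI (by linarith)
      (by rw [add_sub_cancel_left]; linarith)
    rw [add_sub_cancel_left] at hy2
    -- the evaluation functional
    set φ : StrongDual ℝ Y → ℝ := fun z => z y with hφ
    have hφLip : LipschitzWith 1 φ := by
      refine LipschitzWith.of_dist_le_mul (fun z w => ?_)
      simp only [NNReal.coe_one, one_mul, dist_eq_norm]
      calc ‖φ z - φ w‖ = ‖(z - w) y‖ := by simp [hφ, ContinuousLinearMap.sub_apply]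
        _ ≤ ‖z - w‖ * ‖y‖ := (z - w).le_opNorm y
        _ ≤ ‖z - w‖ * 1 := mul_le_mul_of_nonneg_left hy1 (norm_nonneg _)
        _ = ‖z - w‖ := mul_one _
    -- continuity of `t ↦ γ t y`
    have hfc : ContinuousOn (fun t => γ t y) (Set.Icc a b) :=
      fun t ht => (hderiv t ht y).continuousWithinAt
    have hfc' : ContinuousOn (fun t => γ t y) (Set.uIcc u (u + s)) := by
      refine hfc.mono ?_
      rw [Set.uIcc_of_le (by linarith : u ≤ u + s)]
      exact Set.Icc_subset_Icc hJ1 hJ2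
    have hIVT := intermediate_value_uIcc hfc'
    -- the chain of inequalities
    have step1 : ENNReal.ofReal (r / C) ≤ ENNReal.ofReal (m / 2 * s) := by
      apply ENNReal.ofReal_le_ofReal
      rcases le_total (r / (2 * M)) (δ / 2) with h | h
      · rw [hs, min_eq_left h]
        exact aux_div1 hm hM hC0 hC4M hr
      · rw [hs, min_eq_right h]
        exact aux_div2 hm hδ hM hC0 hC4Mba hr hrM
    have step2 : ENNReal.ofReal (m / 2 * s) ≤
        volume (Set.uIcc ((fun t => γ t y) u) ((fun t => γ t y) (u + s))) := by
      rw [Real.volume_interval]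
      exact ENNReal.ofReal_le_ofReal hy2
    have step3 : volume (Set.uIcc ((fun t => γ t y) u) ((fun t => γ t y) (u + s))) ≤
        μH[1] ((fun t => γ t y) '' Set.Icc u (u + s)) := by
      rw [MeasureTheory.hausdorffMeasure_real]
      refine measure_mono ?_
      refine hIVT.trans ?_
      rw [Set.uIcc_of_le (by linarith : u ≤ u + s)]
    have step4 : μH[1] ((fun t => γ t y) '' Set.Icc u (u + s)) ≤
        μH[1] (γ '' Set.Icc u (u + s)) := by
      have h := hφLip.hausdorffMeasure_image_le (le_of_lt one_pos)
        (γ '' Set.Icc u (u + s))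
      simpa [Set.image_image, hφ, ENNReal.rpow_one] using h
    have step5 : μH[1] (γ '' Set.Icc u (u + s)) ≤
        μH[1] (γ '' Set.Icc a b ∩ ball (γ t₀) r) := by
      refine measure_mono ?_
      rintro z ⟨t, ht, rfl⟩
      refine ⟨⟨t, ⟨by linarith [ht.1], by linarith [ht.2]⟩, rfl⟩, ?_⟩
      rw [mem_ball, dist_eq_norm]
      have h1 : ‖γ t - γ t₀‖ ≤ M * |t - t₀| := hLip t₀ ht₀ t ⟨by linarith [ht.1], by linarith [ht.2]⟩
      have h2 : |t - t₀| ≤ s := by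
        rw [abs_le]
        constructor <;> linarith [ht.1, ht.2]
      have h3 : M * s ≤ r / 2 := by
        have := mul_le_mul_of_nonneg_left hs1 hM.le
        have heq : M * (r / (2 * M)) = r / 2 := by field_simp
        linarith
      calc ‖γ t - γ t₀‖ ≤ M * |t - t₀| := h1
        _ ≤ M * s := mul_le_mul_of_nonneg_left h2 hM.le
        _ ≤ r / 2 := h3
        _ < r := by linarith
    exact step1.trans (step2.trans (step3.trans (step4.trans step5)))
  · -- UPPER BOUND
    set S : Set ℝ := Set.Icc a b ∩ γ ⁻¹' (ball (γ t₀) r) with hS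
    have hSsub : S ⊆ Set.Icc a b := Set.inter_subset_left
    have hcover : γ '' Set.Icc a b ∩ ball (γ t₀) r ⊆ γ '' S := by
      rintro z ⟨⟨t, ht, rfl⟩, hz⟩
      exact ⟨t, ⟨ht, hz⟩, rfl⟩
    have hlipOn : LipschitzOnWith M.toNNReal γ (Set.Icc a b) := by
      refine lipschitzOnWith_iff_dist_le_mul.2 (fun t ht t' ht' => ?_)
      rw [dist_eq_norm, Real.dist_eq]
      rw [Real.coe_toNNReal M hM.le]
      exact hLip t' ht' t ht
    -- intervals covering `S`
    set h2 : ℝ := δ / 2 with hh2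
    have hh2pos : 0 < h2 := by positivity
    have hScover : S ⊆ ⋃ j ∈ Finset.range N, (S ∩ Set.Icc (a + j * h2) (a + j * h2 + h2)) := by
      intro t ht
      have htI := hSsub ht
      set j : ℕ := ⌊(t - a) / h2⌋₊ with hj
      have hjN : j < N := by
        have hmono : (t - a) / h2 ≤ (b - a) / h2 := by
          gcongr
          exact htI.2
        have := Nat.floor_le_floor hmono
        omega
      refine Set.mem_biUnion (Finset.mem_range.2 hjN) ⟨ht, ?_⟩
      have hta : (0:ℝ) ≤ (t - a) / h2 := by
        apply div_nonneg _ hh2pos.le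
        linarith [htI.1]
      have hge : (j:ℝ) ≤ (t - a) / h2 := Nat.floor_le hta
      have hlt' : (t - a) / h2 < (j:ℝ) + 1 := Nat.lt_floor_add_one _
      have hge' : (j:ℝ) * h2 ≤ t - a := by
        rw [← le_div_iff₀ hh2pos]
        exact hge
      have hlt'' : t - a < ((j:ℝ) + 1) * h2 := by
        rw [← div_lt_iff₀ hh2pos]
        exact hlt'
      constructor
      · linarith
      · nlinarith
    -- diameter bound on each piece
    have hpiece : ∀ j : ℕ, volume (S ∩ Set.Icc (a + j * h2) (a + j * h2 + h2)) ≤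
        ENNReal.ofReal (4 * r / m) := by
      intro j
      refine (Real.volume_le_diam _).trans ?_
      refine EMetric.diam_le (fun t ht t' ht' => ?_)
      rw [edist_dist]
      apply ENNReal.ofReal_le_ofReal
      rw [Real.dist_eq]
      obtain ⟨⟨htI, htB⟩, htJ⟩ := ht
      obtain ⟨⟨htI', htB'⟩, htJ'⟩ := ht'
      have habs : |t' - t| < δ := by
        rw [abs_lt]
        constructor
        · linarith [htJ.1, htJ.2, htJ'.1, htJ'.2]
        · linarith [htJ.1, htJ.2, htJ'.1, htJ'.2]
      have hb := hbil t htI t' htI' habs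
      have hnorm : ‖γ t' - γ t‖ < 2 * r := by
        rw [Set.mem_preimage, mem_ball] at htB htB'
        calc ‖γ t' - γ t‖ ≤ ‖γ t' - γ t₀‖ + ‖γ t₀ - γ t‖ := norm_sub_le_norm_sub_add_norm_sub _ _ _
          _ = dist (γ t') (γ t₀) + dist (γ t₀) (γ t) := by rw [dist_eq_norm, dist_eq_norm]
          _ < r + r := by rw [dist_comm (γ t₀)]; exact add_lt_add htB' htB
          _ = 2 * r := by ring
      rw [abs_sub_comm, le_div_iff₀ hm]
      linarith [hb, hnorm]
    -- assemble the upper bound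
    have hchain1 : μH[1] (γ '' Set.Icc a b ∩ ball (γ t₀) r) ≤ μH[1] (γ '' S) :=
      measure_mono hcover
    have hchain2 : μH[1] (γ '' S) ≤ (M.toNNReal : ℝ≥0∞) ^ (1:ℝ) * μH[1] S :=
      (hlipOn.mono hSsub).hausdorffMeasure_image_le zero_le_one
    have hchain3 : (μH[1] S : ℝ≥0∞) = volume S := by
      rw [MeasureTheory.hausdorffMeasure_real]
    have hchain4 : volume S ≤ (N : ℝ≥0∞) * ENNReal.ofReal (4 * r / m) := by
      calc volume S ≤ volume (⋃ j ∈ Finset.range N,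
            (S ∩ Set.Icc (a + j * h2) (a + j * h2 + h2))) := measure_mono hScover
        _ ≤ ∑ j ∈ Finset.range N, volume (S ∩ Set.Icc (a + j * h2) (a + j * h2 + h2)) :=
            measure_biUnion_finset_le _ _
        _ ≤ ∑ _j ∈ Finset.range N, ENNReal.ofReal (4 * r / m) :=
            Finset.sum_le_sum (fun j _ => hpiece j)
        _ = (N : ℝ≥0∞) * ENNReal.ofReal (4 * r / m) := by
            rw [Finset.sum_const, Finset.card_range, nsmul_eq_mul]
    calc μH[1] (γ '' Set.Icc a b ∩ ball (γ t₀) r)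
        ≤ (M.toNNReal : ℝ≥0∞) ^ (1:ℝ) * μH[1] S := hchain1.trans hchain2
      _ ≤ (M.toNNReal : ℝ≥0∞) ^ (1:ℝ) * ((N : ℝ≥0∞) * ENNReal.ofReal (4 * r / m)) := by
          rw [hchain3] at *
          exact mul_le_mul_right hchain4 _
      _ = ENNReal.ofReal (M * ((N:ℝ) * (4 * r / m))) := by
          rw [ENNReal.rpow_one]
          rw [show ((M.toNNReal : ℝ≥0∞)) = ENNReal.ofReal M from rfl]
          rw [show ((N : ℝ≥0∞)) = ENNReal.ofReal (N:ℝ) by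
            rw [ENNReal.ofReal_natCast]]
          rw [← ENNReal.ofReal_mul (by positivity), ← ENNReal.ofReal_mul hM.le]
      _ ≤ ENNReal.ofReal (C * r) := by
          apply ENNReal.ofReal_le_ofReal
          have heq : M * ((N:ℝ) * (4 * r / m)) = (4 * (N:ℝ) * M / m) * r := by
            field_simp
          rw [heq]
          exact mul_le_mul_of_nonneg_right hC4NM hr.le
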